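/- For t ∈ (0,1), the function F(t) = ((t^2-1)/(2t)) * ln((1+t)/(1-t)) + 1 equals the convergent series Σ_{n=1}^∞ 2 t^{2n}/(4n²-1). -/

import Mathlib

noncomputable def F (t : ℝ) : ℝ :=
  ((t ^ 2 - 1) / (2 * t)) * Real.log ((1 + t) / (1 - t)) + 1

theorem F_hasSum (t : ℝ) (ht0 : 0 < t) (ht1 : t < 1) :
    HasSum (fun n : ℕ => 2 * t ^ (2 * (n + 1)) / (4 * ((n : ℝ) + 1) ^ 2 - 1)) (F t) := by
  have ht : |t| < 1 := by rw [abs_of_pos ht0]; exact ht1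
  have htne : t ≠ 0 := ne_of_gt ht0
  have h1t : (0:ℝ) < 1 - t := by linarith
  have h1t' : (0:ℝ) < 1 + t := by linarith
  set b : ℕ → ℝ := fun n => t ^ (2 * n) / (2 * n + 1) with hbdef
  set c : ℕ → ℝ := fun n => t ^ (2 * n + 2) / (2 * n + 1) with hcdef
  -- log series
  have hlog := Real.hasSum_log_sub_log_of_abs_lt_one ht
  have hS : HasSum (fun n => c n - b n)
      (((t ^ 2 - 1) / (2 * t)) * Real.log ((1 + t) / (1 - t))) := by
    have := hlog.mul_left ((t ^ 2 - 1) / (2 * t))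
    rw [← Real.log_div (ne_of_gt h1t') (ne_of_gt h1t)] at this
    convert this using 2 with n
    · rfl
    have hn : (2 * (n:ℝ) + 1) ≠ 0 := by positivity
    simp only [hbdef, hcdef]
    field_simp
    ring
  -- summability of b
  have hbsum : Summable b := by
    apply Summable.of_nonneg_of_le (fun n => by positivity)
      (fun n => ?_) (summable_geometric_of_lt_one (by positivity) (by nlinarith : t^2 < 1))
    have h1 : t ^ (2 * n) = (t ^ 2) ^ n := by rw [← pow_mul]
    rw [hbdef]
    simp only
    rw [h1]
    have : (0:ℝ) < 2 * n + 1 := by positivity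
    calc (t ^ 2) ^ n / (2 * (n:ℝ) + 1) ≤ (t ^ 2) ^ n / 1 := by
          apply div_le_div_of_nonneg_left (by positivity) one_pos (by linarith)
      _ = (t ^ 2) ^ n := by ring
  have hb : HasSum b (∑' n, b n) := hbsum.hasSum
  have hcsum : Summable c := by
    have : c = fun n => (c n - b n) + b n := by ext n; ring
    rw [this]; exact hS.summable.add hbsum
  have hc : HasSum c (∑' n, c n) := hcsum.hasSum
  have hCB : (∑' n, c n) - (∑' n, b n)
      = ((t ^ 2 - 1) / (2 * t)) * Real.log ((1 + t) / (1 - t)) :=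
    (hc.sub hb).unique hS
  -- shifted b
  have hshift : HasSum (fun n => b (n + 1)) ((∑' n, b n) - b 0) := by
    rw [hasSum_nat_add_iff 1]
    simpa using hb
  have hb0 : b 0 = 1 := by simp [hbdef]
  have hterm : ∀ n : ℕ, 2 * t ^ (2 * (n + 1)) / (4 * ((n : ℝ) + 1) ^ 2 - 1)
      = c n - b (n + 1) := by
    intro n
    have hn1 : (1:ℝ) ≤ (n:ℝ) + 1 := by
      have : (0:ℝ) ≤ (n:ℝ) := Nat.cast_nonneg n; linarith
    have h1 : (2 * (n:ℝ) + 1) ≠ 0 := by positivity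
    have h2 : (2 * ((n:ℝ) + 1) + 1) ≠ 0 := by positivity
    have h3 : 4 * ((n:ℝ) + 1) ^ 2 - 1 ≠ 0 := by nlinarith [hn1]
    simp only [hbdef, hcdef]
    push_cast
    have he : t ^ (2 * (n + 1)) = t ^ (2 * n + 2) := by ring_nf
    rw [he]
    field_simp
    ring
  have hfin := hc.sub hshift
  have hval : (∑' n, c n) - ((∑' n, b n) - b 0) = F t := by
    rw [hb0]; unfold F; linarith [hCB]
  rw [hval] at hfin
  rw [funext hterm]
  exact hfin
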